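/- Let t ≥ 4 and m ≥ 2 be integers, and let 1 ≤ r ≤ ⌊t/2⌋. Let λ^r be the partition whose β-set is ( {k·t + (t−1) : 0 ≤ k ≤ m−2} if m ≥ 2 ) ∪ ⋃_{j=2}^{r} { k·t + (t+1−2j) : 0 ≤ k ≤ m−1 }. Then λ^r is a (t, mt−1)-core partition with distinct parts, and its size equals −r²·(m²+2m)/2 + r·(m²t+mt+3m)/2 − mt. -/

import Mathlib

/-- A partition: a finite weakly decreasing list of positive integers. -/
structure Partn where
  parts : List ℕ
  pos : ∀ p ∈ parts, 0 < p
  sorted : parts.Pairwise (· ≥ ·)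

namespace Partn

/-- The size of a partition: the sum of its parts. -/
def size (l : Partn) : ℕ := l.parts.sum

/-- The number of rows `k` (0-indexed) with `λ_k ≥ j` (the length of column `j`). -/
def colLen (l : Partn) (j : ℕ) : ℕ := (l.parts.filter (fun p => j ≤ p)).length

/-- The hook length of the box in row `i` (0-indexed) and column `j` (1-indexed):
`λ_i − j + #{k : λ_k ≥ j} − i + 1` (with 1-indexed rows). -/
def hook (l : Partn) (i j : ℕ) : ℕ :=
  (l.parts.getD i 0 - j) + (l.colLen j - (i + 1)) + 1

/-- A partition is a `t`-core if none of its hook lengths is divisible by `t`. -/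
def IsCore (t : ℕ) (l : Partn) : Prop :=
  ∀ i j : ℕ, i < l.parts.length → 1 ≤ j → j ≤ l.parts.getD i 0 → ¬ (t ∣ l.hook i j)

/-- A partition has distinct parts if its parts are strictly decreasing. -/
def DistinctParts (l : Partn) : Prop := l.parts.Pairwise (· > ·)

/-- The β-set of a partition: `{λ_i + ℓ − i : 1 ≤ i ≤ ℓ}` (1-indexed). -/
def betaSet (l : Partn) : Finset ℕ :=
  (Finset.range l.parts.length).image
    (fun i => l.parts.getD i 0 + (l.parts.length - 1 - i))

/-- `nFn t i l` is the number of elements of the β-set of `l` congruent to `i` mod `t`. -/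
def nFn (t i : ℕ) (l : Partn) : ℕ :=
  (l.betaSet.filter (fun x => x % t = i)).card

end Partn

namespace Partn

lemma mem_betaSet (l : Partn) (x : ℕ) :
    x ∈ l.betaSet ↔ ∃ i, i < l.parts.length ∧ x = l.parts.getD i 0 + (l.parts.length - 1 - i) := by
  simp [betaSet, eq_comm]

lemma getD_eq (l : Partn) {i : ℕ} (hi : i < l.parts.length) :
    l.parts.getD i 0 = l.parts[i] := by
  simp [List.getD_eq_getElem?_getD, List.getElem?_eq_getElem hi]

lemma sorted_getD (l : Partn) {a b : ℕ} (hab : a ≤ b) (hb : b < l.parts.length) :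
    l.parts.getD b 0 ≤ l.parts.getD a 0 := by
  rcases eq_or_lt_of_le hab with rfl | h
  · rfl
  · have ha : a < l.parts.length := lt_trans h hb
    rw [getD_eq l hb, getD_eq l ha]
    exact List.pairwise_iff_get.mp l.sorted ⟨a, ha⟩ ⟨b, hb⟩ h

lemma colLen_le_length (l : Partn) (j : ℕ) : l.colLen j ≤ l.parts.length :=
  List.length_filter_le _ _

lemma le_colLen (l : Partn) {i j : ℕ} (hi : i < l.parts.length)
    (hj : j ≤ l.parts.getD i 0) : i + 1 ≤ l.colLen j := by
  have h1 : l.colLen j = (l.parts.take (i+1)).countP (fun p => decide (j ≤ p))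
      + (l.parts.drop (i+1)).countP (fun p => decide (j ≤ p)) := by
    rw [colLen, ← List.countP_eq_length_filter, ← List.countP_append,
      List.take_append_drop]
  have h2 : (l.parts.take (i+1)).countP (fun p => decide (j ≤ p))
      = (l.parts.take (i+1)).length := by
    rw [List.countP_eq_length]
    intro a ha
    simp only [decide_eq_true_eq]
    obtain ⟨k, hk, rfl⟩ := List.mem_iff_getElem.mp ha
    rw [List.getElem_take]
    have hk' : k ≤ i := by simp [List.length_take] at hk; omega
    have hk2 : k < l.parts.length := by omega
    have h5 : l.parts.getD k 0 ≥ l.parts.getD i 0 := sorted_getD l hk' hi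
    have h6 := getD_eq l hk2
    omega
  have h3 : (l.parts.take (i+1)).length = i + 1 := by
    rw [List.length_take]; omega
  omega

lemma colLen_le (l : Partn) {i j : ℕ} (hi : i < l.parts.length)
    (hj : l.parts.getD i 0 < j) : l.colLen j ≤ i := by
  have h1 : l.colLen j = (l.parts.take i).countP (fun p => decide (j ≤ p))
      + (l.parts.drop i).countP (fun p => decide (j ≤ p)) := by
    rw [colLen, ← List.countP_eq_length_filter, ← List.countP_append,
      List.take_append_drop]
  have h2 : (l.parts.drop i).countP (fun p => decide (j ≤ p)) = 0 := by
    rw [List.countP_eq_zero]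
    intro a ha
    simp only [decide_eq_true_eq, not_le]
    obtain ⟨k, hk, rfl⟩ := List.mem_iff_getElem.mp ha
    rw [List.getElem_drop]
    have hk2 : i + k < l.parts.length := by
      rw [List.length_drop] at hk; omega
    have : l.parts.getD (i+k) 0 ≤ l.parts.getD i 0 := sorted_getD l (by omega) hk2
    rw [getD_eq l hk2] at this
    omega
  have h3 : (l.parts.take i).countP (fun p => decide (j ≤ p)) ≤ i := by
    calc _ ≤ (l.parts.take i).length := List.countP_le_length
    _ ≤ i := by rw [List.length_take]; omega
  omega

lemma hook_eq (l : Partn) {i j : ℕ} (hi : i < l.parts.length) (h1 : 1 ≤ j)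
    (hj : j ≤ l.parts.getD i 0) :
    ∃ x, x ∉ l.betaSet ∧
      l.hook i j + x = l.parts.getD i 0 + (l.parts.length - 1 - i) ∧ 0 < l.hook i j := by
  set L := l.parts.length with hL
  set c := l.colLen j with hc
  have hic : i + 1 ≤ c := le_colLen l hi hj
  have hcL : c ≤ L := colLen_le_length l j
  refine ⟨(j - 1) + (L - c), ?_, ?_, ?_⟩
  · intro hmem
    obtain ⟨k, hk, hkx⟩ := (mem_betaSet l _).mp hmem
    by_cases hkc : k + 1 ≤ c
    · have h7 : j ≤ l.parts.getD k 0 := by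
        by_contra hcon
        have := colLen_le l (i := k) (j := j) hk (by omega)
        omega
      omega
    · have h7 : l.parts.getD k 0 < j := by
        by_contra hcon
        have := le_colLen l (i := k) (j := j) hk (by omega)
        omega
      omega
  · rw [hook]; omega
  · rw [hook]; omega

lemma isCore_of_closed (l : Partn) (t : ℕ) (ht : 0 < t)
    (h : ∀ b ∈ l.betaSet, t ≤ b → b - t ∈ l.betaSet) : l.IsCore t := by
  have aux : ∀ d b, b ∈ l.betaSet → t * d ≤ b → b - t * d ∈ l.betaSet := by
    intro d
    induction d with
    | zero => intro b hb _; simpa using hb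
    | succ n ih =>
      intro b hb hd
      have he : t * (n+1) = t * n + t := by ring
      have h1 : b - t * (n+1) = (b - t * n) - t := by omega
      rw [h1]
      exact h _ (ih b hb (by omega)) (by omega)
  intro i j hi h1 hj hdvd
  obtain ⟨x, hx, hsum, hpos⟩ := hook_eq l hi h1 hj
  obtain ⟨d, hd⟩ := hdvd
  have hb : l.parts.getD i 0 + (l.parts.length - 1 - i) ∈ l.betaSet :=
    (mem_betaSet l _).mpr ⟨i, hi, rfl⟩
  have hdle : t * d ≤ l.parts.getD i 0 + (l.parts.length - 1 - i) := by omega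
  have h9 := aux d _ hb hdle
  have hxe : l.parts.getD i 0 + (l.parts.length - 1 - i) - t * d = x := by omega
  rw [hxe] at h9
  exact hx h9

lemma isCore_of_lt (l : Partn) (s : ℕ) (h : ∀ b ∈ l.betaSet, b < s) : l.IsCore s := by
  intro i j hi h1 hj hdvd
  obtain ⟨x, hx, hsum, hpos⟩ := hook_eq l hi h1 hj
  have hb : l.parts.getD i 0 + (l.parts.length - 1 - i) ∈ l.betaSet :=
    (mem_betaSet l _).mpr ⟨i, hi, rfl⟩
  have := h _ hb
  have := Nat.eq_zero_of_dvd_of_lt hdvd (by omega)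
  omega

end Partn

/-! ### Construction of the specific partition -/

def gFn (t m r i : ℕ) : ℕ := (m - (i+1)/r) * (t - r) - (i+1)%r

lemma gFn_spec (t m r : ℕ) (hr1 : 1 ≤ r) {i : ℕ} (hi : i + 1 < r * m) :
    ∃ K J, (i+1)/r = K ∧ (i+1)%r = J ∧ i + 1 = r * K + J ∧ J < r ∧ K ≤ m - 1 ∧ K < m ∧
      gFn t m r i = (m - K) * (t - r) - J ∧ t - r ≤ (m - K) * (t - r) := by
  have hmr : i + 1 < m * r := by rw [mul_comm] at hi; exact hi
  have hK : (i+1)/r < m := (Nat.div_lt_iff_lt_mul (by omega)).mpr hmr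
  exact ⟨(i+1)/r, (i+1)%r, rfl, rfl, (Nat.div_add_mod _ _).symm, Nat.mod_lt _ (by omega),
    by omega, hK, rfl, Nat.le_mul_of_pos_left _ (by omega)⟩

lemma gFn_lt (t m r : ℕ) (hm : 2 ≤ m) (hr1 : 1 ≤ r) (hr2 : 2 * r ≤ t)
    {a b : ℕ} (hab : a < b) (hb : b + 1 < r * m) :
    gFn t m r b < gFn t m r a := by
  obtain ⟨Ka, Ja, hdva, hmoa, heqa, hJa, hKa, hKa', hga, hba⟩ :=
    gFn_spec t m r hr1 (show a + 1 < r * m by omega)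
  obtain ⟨Kb, Jb, hdvb, hmob, heqb, hJb, hKb, hKb', hgb, hbb⟩ := gFn_spec t m r hr1 hb
  have hKab : Ka ≤ Kb := by
    rw [← hdva, ← hdvb]; exact Nat.div_le_div_right (by omega)
  rcases eq_or_lt_of_le hKab with rfl | hlt
  · rw [hga, hgb]; omega
  · have hstep : (m - Kb) * (t - r) + (t - r) ≤ (m - Ka) * (t - r) := by
      have h1 : (m - Kb) + 1 ≤ m - Ka := by omega
      calc (m - Kb) * (t - r) + (t - r) = ((m - Kb) + 1) * (t - r) := by ring
        _ ≤ (m - Ka) * (t - r) := Nat.mul_le_mul_right _ h1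
    rw [hga, hgb]; omega

def lamList (t m r : ℕ) : List ℕ := (List.range (r*m - 1)).map (gFn t m r)

lemma lamList_length (t m r : ℕ) : (lamList t m r).length = r*m - 1 := by
  simp [lamList]

lemma lamList_getD (t m r : ℕ) {i : ℕ} (hi : i < r*m - 1) :
    (lamList t m r).getD i 0 = gFn t m r i := by
  have hi' : i < (List.range (r*m-1)).length := by simpa using hi
  simp [lamList, List.getD_eq_getElem?_getD, List.getElem?_map, List.getElem?_range hi]

lemma lamList_sorted (t m r : ℕ) (hm : 2 ≤ m) (hr1 : 1 ≤ r) (hr2 : 2 * r ≤ t) :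
    (lamList t m r).Pairwise (· > ·) := by
  rw [lamList, List.pairwise_iff_getElem]
  intro a b ha hb hab
  simp only [List.length_map, List.length_range] at ha hb
  simp only [List.getElem_map, List.getElem_range]
  exact gFn_lt t m r hm hr1 hr2 hab (by omega)

lemma lamList_pos (t m r : ℕ) (hm : 2 ≤ m) (hr1 : 1 ≤ r) (hr2 : 2 * r ≤ t) :
    ∀ p ∈ lamList t m r, 0 < p := by
  intro p hp
  simp only [lamList, List.mem_map, List.mem_range] at hp
  obtain ⟨i, hi, rfl⟩ := hp
  obtain ⟨K, J, _, _, _, hJ, _, _, hg, hb⟩ := gFn_spec t m r hr1 (i := i) (by omega)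
  rw [hg]; omega

lemma exists_idx (t m r : ℕ) (hr1 : 1 ≤ r) (hm : 2 ≤ m) {K J : ℕ} (hK : K ≤ m - 1) (hJ : J < r)
    (h0 : 1 ≤ r * K + J) :
    ∃ i, i < r * m - 1 ∧ (i+1)/r = K ∧ (i+1)%r = J := by
  have hsh : r*K + J - 1 + 1 = J + r*K := by omega
  refine ⟨r*K + J - 1, ?_, ?_, ?_⟩
  · have h1 : r*K ≤ r*(m-1) := Nat.mul_le_mul_left r hK
    have h2 : r*(m-1) + r = r*m := by
      have h3 : r*((m-1)+1) = r*(m-1) + r := by ring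
      rw [show (m-1)+1 = m by omega] at h3
      omega
    omega
  · rw [hsh, Nat.add_mul_div_left _ _ (show 0 < r by omega), Nat.div_eq_of_lt hJ, zero_add]
  · rw [hsh, Nat.add_mul_mod_self_left, Nat.mod_eq_of_lt hJ]

lemma list_sum_range (n : ℕ) (f : ℕ → ℕ) :
    ((List.range n).map f).sum = ∑ i ∈ Finset.range n, f i := by
  induction n with
  | zero => simp
  | succ k ih => rw [List.range_succ, Finset.sum_range_succ, List.map_append]; simp [ih]

lemma sum_divmod (r : ℕ) (hr : 0 < r) (F : ℕ → ℕ → ℕ) (m : ℕ) :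
    ∑ p ∈ Finset.range (r*m), F (p/r) (p%r) = ∑ K ∈ Finset.range m, ∑ J ∈ Finset.range r, F K J := by
  induction m with
  | zero => simp
  | succ n ih =>
    rw [show r*(n+1) = r*n + r by ring, Finset.sum_range_add, ih, Finset.sum_range_succ]
    congr 1
    apply Finset.sum_congr rfl
    intro J hJ
    rw [Finset.mem_range] at hJ
    rw [show r*n + J = J + r*n by ring, Nat.add_mul_div_left _ _ hr, Nat.add_mul_mod_self_left,
      Nat.div_eq_of_lt hJ, Nat.mod_eq_of_lt hJ, zero_add]

lemma beta_val (t m r : ℕ) (ht : 4 ≤ t) (hm : 2 ≤ m) (hr1 : 1 ≤ r) (hr2 : 2*r ≤ t)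
    {i K J : ℕ} (hi : i < r*m - 1) (hdv : (i+1)/r = K) (hmo : (i+1)%r = J) :
    gFn t m r i + (r*m - 1 - 1 - i) = (m - 1 - K)*t + (t - 1 - 2*J) ∧ J < r ∧ K < m
      ∧ ¬(K = 0 ∧ J = 0) := by
  obtain ⟨K', J', hdv', hmo', heq, hJ', hK1', hK2', hg, hb⟩ :=
    gFn_spec t m r hr1 (i := i) (by omega)
  rw [hdv] at hdv'; rw [hmo] at hmo'
  subst hdv'; subst hmo'
  have hrm2 : 2 ≤ r * m := by have := Nat.mul_le_mul hr1 hm; simpa using this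
  refine ⟨?_, hJ', hK2', ?_⟩
  · rw [hg]
    have c2 : J ≤ (m-K)*(t-r) := by omega
    have c3 : r ≤ t := by omega
    have c4 : K ≤ m := by omega
    have c5 : i ≤ r*m - 1 - 1 := by omega
    have c6 : 1 ≤ r*m - 1 := by omega
    have c7 : 1 ≤ r*m := by omega
    have c8 : 1 + 2*J ≤ t := by omega
    have c8' : 2*J ≤ t - 1 := by omega
    have c9 : 1 ≤ t := by omega
    have c10 : 1 ≤ m := by omega
    have hz : (i:ℤ) + 1 = r*K + J := by exact_mod_cast heq
    zify [c2, c3, c4, c5, c6, c7, c8, c8', c9, c10, hK1']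
    linear_combination -hz
  · rintro ⟨rfl, rfl⟩
    simp at heq

/-- The partition `λ^r` with β-set
`{kt + (t−1) : 0 ≤ k ≤ m−2} ∪ ⋃_(j=2)^r {kt + (t+1−2j) : 0 ≤ k ≤ m−1}` is a
`(t, mt−1)`-core partition with distinct parts of size
`−r²(m²+2m)/2 + r(m²t+mt+3m)/2 − mt`. -/
theorem lambda_r_t_mt_sub_one (t m r : ℕ) (ht : 4 ≤ t) (hm : 2 ≤ m)
    (hr1 : 1 ≤ r) (hr2 : r ≤ t / 2) :
    ∃ lam : Partn,
      lam.betaSet = ((Finset.range (m - 1)).image (fun k => k * t + (t - 1))) ∪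
        (Finset.Icc 2 r).biUnion
          (fun j => (Finset.range m).image (fun k => k * t + (t + 1 - 2 * j))) ∧
      lam.IsCore t ∧ lam.IsCore (m * t - 1) ∧ lam.DistinctParts ∧
      (lam.size : ℚ) = -(r : ℚ) ^ 2 * ((m : ℚ) ^ 2 + 2 * m) / 2
        + (r : ℚ) * ((m : ℚ) ^ 2 * t + m * t + 3 * m) / 2 - m * t := by
  have h2r : 2 * r ≤ t := by omega
  have hrm2 : 2 ≤ r * m := by have := Nat.mul_le_mul hr1 hm; simpa using this
  let lam : Partn := ⟨lamList t m r, lamList_pos t m r hm hr1 h2r,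
    (lamList_sorted t m r hm hr1 h2r).imp (fun h => le_of_lt h)⟩
  have hparts : lam.parts = lamList t m r := rfl
  have hlen : lam.parts.length = r*m - 1 := by rw [hparts, lamList_length]
  have hbeta : lam.betaSet = ((Finset.range (m - 1)).image (fun k => k * t + (t - 1))) ∪
      (Finset.Icc 2 r).biUnion
        (fun j => (Finset.range m).image (fun k => k * t + (t + 1 - 2 * j))) := by
    ext x
    rw [Partn.mem_betaSet]
    simp only [hlen, hparts, lamList_length]
    constructor
    · rintro ⟨i, hi, rfl⟩
      rw [lamList_getD t m r hi]
      obtain ⟨hval, hJr, hKm, hK0⟩ := beta_val t m r ht hm hr1 h2r hi rfl rfl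
      rw [hval]
      generalize hKg : (i+1)/r = K at hKm hK0 ⊢
      generalize hJg : (i+1)%r = J at hJr hK0 ⊢
      simp only [Finset.mem_union, Finset.mem_image, Finset.mem_range, Finset.mem_biUnion,
        Finset.mem_Icc]
      by_cases hJ0 : J = 0
      · subst hJ0
        left
        refine ⟨m-1-K, by omega, ?_⟩
        norm_num
      · right
        refine ⟨J + 1, ⟨by omega, by omega⟩, m-1-K, by omega, ?_⟩
        have e2 : t + 1 - 2*(J + 1) = t - 1 - 2*J := by omega
        rw [e2]
    · intro hx
      simp only [Finset.mem_union, Finset.mem_image, Finset.mem_range, Finset.mem_biUnion,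
        Finset.mem_Icc] at hx
      rcases hx with ⟨k, hk, rfl⟩ | ⟨j, ⟨hj2, hjr⟩, k, hk, rfl⟩
      · obtain ⟨i, hi, hdv, hmo⟩ := exists_idx t m r hr1 hm (K := m-1-k) (J := 0)
          (by omega) (by omega)
          (by have := Nat.mul_le_mul hr1 (show 1 ≤ m-1-k by omega); omega)
        obtain ⟨hval, _, _, _⟩ := beta_val t m r ht hm hr1 h2r hi hdv hmo
        refine ⟨i, hi, ?_⟩
        rw [lamList_getD t m r hi, hval]
        have e1 : m-1-(m-1-k) = k := by omega
        rw [e1]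
        norm_num
      · obtain ⟨i, hi, hdv, hmo⟩ := exists_idx t m r hr1 hm (K := m-1-k) (J := j-1)
          (by omega) (by omega) (by omega)
        obtain ⟨hval, _, _, _⟩ := beta_val t m r ht hm hr1 h2r hi hdv hmo
        refine ⟨i, hi, ?_⟩
        rw [lamList_getD t m r hi, hval]
        have e1 : m-1-(m-1-k) = k := by omega
        have e2 : t - 1 - 2*(j-1) = t + 1 - 2*j := by omega
        rw [e1, e2]
  refine ⟨lam, hbeta, ?_, ?_, ?_, ?_⟩
  · -- t-core
    apply Partn.isCore_of_closed lam t (by omega)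
    intro b hb htb
    rw [hbeta] at hb ⊢
    simp only [Finset.mem_union, Finset.mem_image, Finset.mem_range, Finset.mem_biUnion,
      Finset.mem_Icc] at hb ⊢
    rcases hb with ⟨k, hk, rfl⟩ | ⟨j, hj, k, hk, rfl⟩
    · rcases Nat.eq_zero_or_pos k with rfl | hkpos
      · simp at htb; omega
      · left
        refine ⟨k-1, by omega, ?_⟩
        have h3 : ((k-1)+1)*t = (k-1)*t + t := by ring
        rw [show (k-1)+1 = k by omega] at h3
        omega
    · rcases Nat.eq_zero_or_pos k with rfl | hkpos
      · simp at htb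
        have : 2*j ≤ t := by omega
        omega
      · right
        refine ⟨j, hj, k-1, by omega, ?_⟩
        have h3 : ((k-1)+1)*t = (k-1)*t + t := by ring
        rw [show (k-1)+1 = k by omega] at h3
        omega
  · -- (mt-1)-core
    apply Partn.isCore_of_lt
    intro b hb
    rw [hbeta] at hb
    simp only [Finset.mem_union, Finset.mem_image, Finset.mem_range, Finset.mem_biUnion,
      Finset.mem_Icc] at hb
    rcases hb with ⟨k, hk, rfl⟩ | ⟨j, ⟨hj2, hjr⟩, k, hk, rfl⟩
    · have h1 : k*t ≤ (m-2)*t := Nat.mul_le_mul_right t (by omega)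
      have h2 : ((m-2)+2)*t = (m-2)*t + 2*t := by ring
      rw [show (m-2)+2 = m by omega] at h2
      omega
    · have h1 : k*t ≤ (m-1)*t := Nat.mul_le_mul_right t (by omega)
      have h2 : ((m-1)+1)*t = (m-1)*t + t := by ring
      rw [show (m-1)+1 = m by omega] at h2
      omega
  · exact lamList_sorted t m r hm hr1 h2r
  · -- size
    have hsize : lam.size = ∑ i ∈ Finset.range (r*m - 1), gFn t m r i := by
      show (lamList t m r).sum = _
      rw [lamList, list_sum_range]
    have e1 : ∑ p ∈ Finset.range (r*m), ((m - p/r) * (t-r) - p%r) = lam.size + m*(t-r) := by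
      rw [show r*m = (r*m-1)+1 by omega, Finset.sum_range_succ']
      rw [hsize]
      congr 1
      norm_num
    have e2 := sum_divmod r (by omega) (fun K J => (m - K)*(t-r) - J) m
    have e3 : ∀ K ∈ Finset.range m, 2 * (∑ J ∈ Finset.range r, ((m-K)*(t-r) - J)) + r*(r-1)
        = 2*(r*((m-K)*(t-r))) := by
      intro K hK
      rw [Finset.mem_range] at hK
      have hP : r ≤ (m-K)*(t-r) := le_trans (by omega) (Nat.le_mul_of_pos_left _ (by omega))
      have h4 : ∑ J ∈ Finset.range r, (((m-K)*(t-r) - J) + J) = ∑ J ∈ Finset.range r, (m-K)*(t-r) :=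
        Finset.sum_congr rfl (fun J hJ => by rw [Finset.mem_range] at hJ; omega)
      rw [Finset.sum_add_distrib, Finset.sum_const, Finset.card_range, smul_eq_mul] at h4
      have h6 := Finset.sum_range_id_mul_two r
      omega
    have e4 : 2 * (∑ K ∈ Finset.range m, ∑ J ∈ Finset.range r, ((m-K)*(t-r) - J)) + m*(r*(r-1))
        = 2 * ((r*(t-r)) * (∑ K ∈ Finset.range m, (m - K))) := by
      have h7 : ∑ K ∈ Finset.range m, (2 * (∑ J ∈ Finset.range r, ((m-K)*(t-r) - J)) + r*(r-1))
          = ∑ K ∈ Finset.range m, 2*(r*((m-K)*(t-r))) := Finset.sum_congr rfl e3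
      rw [Finset.sum_add_distrib, Finset.sum_const, Finset.card_range, smul_eq_mul,
        ← Finset.mul_sum] at h7
      have h8 : ∑ K ∈ Finset.range m, 2*(r*((m-K)*(t-r)))
          = 2*((r*(t-r)) * ∑ K ∈ Finset.range m, (m-K)) := by
        rw [Finset.mul_sum, Finset.mul_sum]
        apply Finset.sum_congr rfl
        intro K _
        ring
      rw [h8] at h7
      exact h7
    have e6 : 2 * (∑ K ∈ Finset.range m, (m - K)) = m*(m+1) := by
      have h9 : ∑ K ∈ Finset.range m, (m - (m-1-K)) = ∑ K ∈ Finset.range m, (m-K) :=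
        Finset.sum_range_reflect _ m
      have h10 : ∑ K ∈ Finset.range m, (m - (m-1-K)) = ∑ K ∈ Finset.range m, (K+1) :=
        Finset.sum_congr rfl (fun K hK => by rw [Finset.mem_range] at hK; omega)
      have h11 : ∑ K ∈ Finset.range m, (K+1) = (∑ K ∈ Finset.range m, K) + m := by
        rw [Finset.sum_add_distrib, Finset.sum_const, Finset.card_range, smul_eq_mul, mul_one]
      have h12 := Finset.sum_range_id_mul_two m
      have h13 : m*(m-1) + 2*m = m*(m+1) := by
        zify [show 1 ≤ m by omega]; ring
      omega
    have hA : 2*(lam.size + m*(t-r)) + m*(r*(r-1))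
        = 2*((r*(t-r)) * (∑ K ∈ Finset.range m, (m-K))) := by
      rw [← e1, e2]
      exact e4
    have hB : 4*lam.size + 4*(m*(t-r)) + 2*(m*(r*(r-1))) = 2*((r*(t-r))*(m*(m+1))) := by
      have h14 : 2*(2*((r*(t-r)) * (∑ K ∈ Finset.range m, (m-K))))
          = 2*((r*(t-r))*(2*(∑ K ∈ Finset.range m, (m-K)))) := by ring
      rw [e6] at h14
      omega
    have hrt : r ≤ t := by omega
    have hr1' : 1 ≤ r := hr1
    qify [hrt, hr1'] at hB
    linear_combination (1/4 : ℚ) * hB
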